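/- If C has enough projectives, then for any additive F : C → D and any right exact G : C → D there is an isomorphism Nat(G, F) ≅ Nat(G, L₀F), natural in both variables; equivalently, L₀ is right adjoint to the inclusion of right exact functors into (C, D). -/
import Mathlib


open CategoryTheory CategoryTheory.Limits

universe v₁ v₂ u₁ u₂

variable {C : Type u₁} {D : Type u₂} [Category.{v₁} C] [Category.{v₂} D] [Abelian C] [Abelian D]

/-- `L` is a zeroth left derived functor of `F`, i.e. there is a canonical morphism `L ⟶ F`
which is an isomorphism on projectives, and for every projective presentation
`P₁ → P₀ → X → 0` the sequence `L(P₁) → L(P₀) → L(X) → 0` is exact (so that, via the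
isomorphisms `L(Pⱼ) ≅ F(Pⱼ)`, `L(X)` is the cokernel of `F(P₁) → F(P₀)`). -/
structure IsZerothLeftDerivedFunctor (F L : C ⥤ D) [F.Additive] [L.Additive] where
  counit : L ⟶ F
  isIso_counit_app_of_projective : ∀ (P : C) [Projective P], IsIso (counit.app P)
  isCokernel : ∀ {X P0 P1 : C} (p : P1 ⟶ P0) (π : P0 ⟶ X) [Projective P0] [Projective P1]
    [Epi π] (w : p ≫ π = 0), (ShortComplex.mk p π w).Exact →
    Nonempty (IsColimit (CokernelCofork.ofπ (L.map π)
      (by rw [← L.map_comp, w, L.map_zero])))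

/-- A functor is right exact if it sends short exact sequences `0 → A → B → C → 0`
to exact sequences `G(A) → G(B) → G(C) → 0`. -/
def IsRightExactFunctor (G : C ⥤ D) [G.Additive] : Prop :=
  ∀ S : ShortComplex C, S.ShortExact → Epi (S.map G).g ∧ (S.map G).Exact

/-- If `C` has enough projectives, then for any additive `F : C ⥤ D` and any
right exact `G : C ⥤ D`, postcomposition with the canonical morphism `L₀F ⟶ F` gives a
bijection `Nat(G, L₀F) ≅ Nat(G, F)`; i.e. `L₀` is right adjoint to the inclusion of right
exact functors. -/
theorem zerothLeftDerived_adjunction_bijection [EnoughProjectives C]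
    (F L G : C ⥤ D) [F.Additive] [L.Additive] [G.Additive]
    (hL : IsZerothLeftDerivedFunctor F L)
    (hG : IsRightExactFunctor G) :
    Function.Bijective (fun (α : G ⟶ L) => α ≫ hL.counit) := by
  have hepi : ∀ {A B : C} (e : A ⟶ B) [Epi e], Epi (G.map e) := by
    intro A B e he
    exact (hG (ShortComplex.mk (kernel.ι e) e (kernel.condition e))
      ⟨ShortComplex.exact_of_f_is_kernel _ (kernelIsKernel e)⟩).1
  haveI hIso : ∀ (P : C) [Projective P], IsIso (hL.counit.app P) :=
    hL.isIso_counit_app_of_projective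
  constructor
  · intro α α' h
    ext X
    haveI : Epi (G.map (Projective.π X)) := hepi _
    rw [← cancel_epi (G.map (Projective.π X)), α.naturality, α'.naturality]
    congr 1
    have h1 : α.app (Projective.over X) ≫ hL.counit.app _ =
        α'.app (Projective.over X) ≫ hL.counit.app _ :=
      congrArg (fun (t : G ⟶ F) => t.app (Projective.over X)) h
    rw [← cancel_mono (hL.counit.app (Projective.over X))]
    exact h1
  · intro α
    have hγ : ∀ {A B : C} [Projective A] [Projective B] (f : A ⟶ B),
        G.map f ≫ (α.app B ≫ inv (hL.counit.app B)) =
          (α.app A ≫ inv (hL.counit.app A)) ≫ L.map f := by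
      intro A B _ _ f
      rw [α.naturality_assoc, Category.assoc]
      congr 1
      rw [IsIso.eq_inv_comp, ← Category.assoc, IsIso.comp_inv_eq]
      exact (hL.counit.naturality f).symm
    have hex : ∀ X : C,
        ((ShortComplex.mk (kernel.ι (Projective.π X)) (Projective.π X)
          (kernel.condition _)).map G).Exact :=
      fun X => (hG _ ⟨ShortComplex.exact_of_f_is_kernel _ (kernelIsKernel _)⟩).2
    haveI hSg : ∀ X : C, Epi ((ShortComplex.mk (kernel.ι (Projective.π X)) (Projective.π X)
        (kernel.condition _)).map G).g := fun X => hepi _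
    haveI hepiπ : ∀ X : C, Epi (G.map (Projective.π X)) := fun X => hepi _
    have hcond : ∀ X : C, G.map (kernel.ι (Projective.π X)) ≫
        ((α.app (Projective.over X) ≫ inv (hL.counit.app _)) ≫ L.map (Projective.π X)) = 0 := by
      intro X
      haveI : Epi (G.map (Projective.π (kernel (Projective.π X)))) := hepi _
      have hz : (Projective.π (kernel (Projective.π X)) ≫ kernel.ι (Projective.π X)) ≫
          Projective.π X = 0 := by rw [Category.assoc, kernel.condition, comp_zero]
      rw [← cancel_epi (G.map (Projective.π (kernel (Projective.π X)))), comp_zero,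
        ← G.map_comp_assoc, ← Category.assoc, hγ, Category.assoc, ← L.map_comp, hz,
        L.map_zero, comp_zero]
    let β : ∀ X : C, G.obj X ⟶ L.obj X := fun X =>
      (hex X).desc ((α.app (Projective.over X) ≫ inv (hL.counit.app _)) ≫
        L.map (Projective.π X)) (hcond X)
    have hβ : ∀ X : C, G.map (Projective.π X) ≫ β X =
        (α.app (Projective.over X) ≫ inv (hL.counit.app _)) ≫ L.map (Projective.π X) :=
      fun X => (hex X).g_desc _ _
    have hnat : ∀ {X Y : C} (f : X ⟶ Y), G.map f ≫ β Y = β X ≫ L.map f := by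
      intro X Y f
      rw [← cancel_epi (G.map (Projective.π X))]
      have hlift : Projective.factorThru (Projective.π X ≫ f) (Projective.π Y) ≫
          Projective.π Y = Projective.π X ≫ f := Projective.factorThru_comp _ _
      calc G.map (Projective.π X) ≫ G.map f ≫ β Y
          = G.map (Projective.factorThru (Projective.π X ≫ f) (Projective.π Y)) ≫
              (G.map (Projective.π Y) ≫ β Y) := by
            rw [← G.map_comp_assoc, ← G.map_comp_assoc, hlift]
        _ = (α.app (Projective.over X) ≫ inv (hL.counit.app _)) ≫
              L.map (Projective.π X) ≫ L.map f := by
            rw [hβ, ← Category.assoc, hγ, Category.assoc, ← L.map_comp, hlift,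
              L.map_comp, Category.assoc]
        _ = G.map (Projective.π X) ≫ β X ≫ L.map f := by
            rw [← Category.assoc, ← hβ, Category.assoc]
    refine ⟨{ app := β, naturality := fun _ _ f => hnat f }, ?_⟩
    ext X
    show β X ≫ hL.counit.app X = α.app X
    rw [← cancel_epi (G.map (Projective.π X)), ← Category.assoc, hβ, Category.assoc,
      hL.counit.naturality, Category.assoc, IsIso.inv_hom_id_assoc, α.naturality]
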